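/- Let E be a real normed vector space with its Borel σ-algebra, let κ be a Markov kernel from E to E, let γ ∈ [0, 1), let x_o ∈ E, and let C₁, C₂, R_max ≥ 0. Let Q : E → ℝ be a measurable function satisfying |Q(x) − Q(y)| ≤ C₁ (C₂ √‖x − y‖ + 2‖x − y‖) for all x, y ∈ E, integrable with respect to κ(x) for every x, and let r : E → ℝ satisfy |r(x)| ≤ R_max for all x. Write d₁(x) = ‖x − x_o‖ and d₂(x') = ‖x' − x_o‖, and assume x' ↦ C₂√(d₂(x')) + 2 d₂(x') is integrable with respect to κ(x). Then for every x ∈ E, |Q(x) − r(x) − γ ∫ Q(x') dκ(x)(x')| ≤ (1 − γ)|Q(x_o)| + R_max + C₁ (C₂ √(d₁(x)) + 2 d₁(x)) + (2 − γ) C₁ ∫ (C₂ √(d₂(x')) + 2 d₂(x')) dκ(x)(x'). -/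

import Mathlib

open MeasureTheory ProbabilityTheory

/-- Pointwise bound on the Bellman residual of a smooth Q-function in terms of the
value at the dataset centroid, the reward bound, and the sample-to-centroid
distances (core inequality of the paper's Theorem 2). -/
theorem bellman_residual_pointwise_bound
    {E : Type*} [NormedAddCommGroup E] [NormedSpace ℝ E]
    [MeasurableSpace E] [BorelSpace E]
    (κ : Kernel E E) [IsMarkovKernel κ]
    (γ : ℝ) (hγ0 : 0 ≤ γ) (hγ1 : γ < 1)
    (xo : E) (C₁ C₂ Rmax : ℝ) (hC₁ : 0 ≤ C₁) (hC₂ : 0 ≤ C₂) (hRmax : 0 ≤ Rmax)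
    (Q : E → ℝ) (hQmeas : Measurable Q)
    (hQsmooth : ∀ x y : E,
      |Q x - Q y| ≤ C₁ * (C₂ * Real.sqrt ‖x - y‖ + 2 * ‖x - y‖))
    (hQint : ∀ x, Integrable Q (κ x))
    (r : E → ℝ) (hr : ∀ x, |r x| ≤ Rmax)
    (hint : ∀ x, Integrable
      (fun x' => C₂ * Real.sqrt ‖x' - xo‖ + 2 * ‖x' - xo‖) (κ x)) :
    ∀ x : E,
      |Q x - r x - γ * ∫ x', Q x' ∂(κ x)| ≤
        (1 - γ) * |Q xo| + Rmax +
          C₁ * (C₂ * Real.sqrt ‖x - xo‖ + 2 * ‖x - xo‖) +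
          (2 - γ) * C₁ *
            ∫ x', (C₂ * Real.sqrt ‖x' - xo‖ + 2 * ‖x' - xo‖) ∂(κ x) := by
  intro x
  set I := ∫ x', Q x' ∂(κ x) with hI
  set J := ∫ x', (C₂ * Real.sqrt ‖x' - xo‖ + 2 * ‖x' - xo‖) ∂(κ x) with hJ
  have hg0 : ∀ x' : E, 0 ≤ C₂ * Real.sqrt ‖x' - xo‖ + 2 * ‖x' - xo‖ := by
    intro x'
    positivity
  have hJ0 : 0 ≤ J := integral_nonneg fun x' => hg0 x'
  -- bound on |Q xo - I|
  have hQoI : |Q xo - I| ≤ C₁ * J := by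
    have : Q xo - I = ∫ x', (Q xo - Q x') ∂(κ x) := by
      rw [integral_sub (integrable_const _) (hQint x), integral_const]
      simp
      exact hI
    rw [this]
    calc |∫ x', (Q xo - Q x') ∂(κ x)| ≤ ∫ x', |Q xo - Q x'| ∂(κ x) := by
          simpa [Real.norm_eq_abs] using
            norm_integral_le_integral_norm (μ := κ x) (fun x' => Q xo - Q x')
      _ ≤ ∫ x', C₁ * (C₂ * Real.sqrt ‖x' - xo‖ + 2 * ‖x' - xo‖) ∂(κ x) := by
          refine integral_mono_of_nonneg (Filter.Eventually.of_forall fun x' => abs_nonneg _)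
            ((hint x).const_mul C₁) (Filter.Eventually.of_forall fun x' => ?_)
          have := hQsmooth xo x'
          simpa [abs_sub_comm, norm_sub_rev] using this
      _ = C₁ * J := by rw [hJ, integral_const_mul]
  have hdecomp : Q x - r x - γ * I =
      (Q x - Q xo) + (1 - γ) * Q xo + γ * (Q xo - I) - r x := by ring
  calc |Q x - r x - γ * I|
      ≤ |Q x - Q xo| + |(1 - γ) * Q xo| + |γ * (Q xo - I)| + |r x| := by
        rw [hdecomp]
        refine (abs_sub _ _).trans ?_
        gcongr
        refine (abs_add_le _ _).trans ?_
        gcongr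
        exact abs_add_le _ _
    _ ≤ C₁ * (C₂ * Real.sqrt ‖x - xo‖ + 2 * ‖x - xo‖) + (1 - γ) * |Q xo|
        + (2 - γ) * C₁ * J + Rmax := by
        refine add_le_add (add_le_add (add_le_add (hQsmooth x xo) ?_) ?_) (hr x)
        · rw [abs_mul, abs_of_nonneg (by linarith : (0:ℝ) ≤ 1 - γ)]
        · rw [abs_mul, abs_of_nonneg hγ0]
          calc γ * |Q xo - I| ≤ γ * (C₁ * J) := by
                exact mul_le_mul_of_nonneg_left hQoI hγ0
            _ ≤ (2 - γ) * C₁ * J := by nlinarith [mul_nonneg hC₁ hJ0]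
    _ = (1 - γ) * |Q xo| + Rmax + C₁ * (C₂ * Real.sqrt ‖x - xo‖ + 2 * ‖x - xo‖)
        + (2 - γ) * C₁ * J := by ring
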